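/- Let m, n, r be integers with 1 ≤ m ≤ n, 0 ≤ r ≤ n−1, and let k be an integer with 1 ≤ k ≤ ⌊m/2⌋. Then the sum of geodesic distances d(u,v) over ordered-span-k pairs of the set J^r_{n,m} in C_n equals nk if k < m/2 or n is even, and equals (n−1)k if k = m/2 and n is odd. -/

import Mathlib

/-- Geodesic distance in the cycle `C_n` on vertex set `ℤ/nℤ`. -/
def cycleDist (n : ℕ) (u v : ZMod n) [NeZero n] : ℕ :=
  min (v - u).val (n - (v - u).val)

section Aux

/-- upper bound for floor of a sum -/
private lemma div_add_ub (x y m : ℕ) (hm : 0 < m) :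
    (x + y) / m ≤ x / m + (y + m - 1) / m := by
  conv_lhs => rw [← Nat.div_add_mod x m]
  rw [add_assoc, Nat.mul_add_div hm]
  have h1 : x % m + y ≤ y + m - 1 := by
    have := Nat.mod_lt x hm
    omega
  exact Nat.add_le_add_left (Nat.div_le_div_right h1) _

end Aux

/-- For `1 ≤ m ≤ n`, `0 ≤ r ≤ n−1`, and `1 ≤ k ≤ ⌊m/2⌋`, the sum of geodesic distances
over span-`k` ordered pairs of the set `J^r_{n,m} = { ⌊(ni+r)/m⌋ : 0 ≤ i < m }` equals
`nk` if `k < m/2` or `n` is even, and `(n−1)k` if `k = m/2` and `n` is odd. -/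
theorem stmt_19 (n m r k : ℕ) [NeZero n] (hm : 1 ≤ m) (hmn : m ≤ n)
    (hr : r ≤ n - 1) (hk1 : 1 ≤ k) (hk2 : k ≤ m / 2) :
    ∑ i ∈ Finset.range m,
        cycleDist n (((n * i + r) / m : ℕ) : ZMod n)
          (((n * ((i + k) % m) + r) / m : ℕ) : ZMod n) =
      if 2 * k < m ∨ Even n then n * k else (n - 1) * k := by
  have hm0 : 0 < m := hm
  have h2k : 2 * k ≤ m := by omega
  have hn2 : 2 ≤ n := by omega
  set a : ℕ → ℕ := fun i => (n * i + r) / m with ha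
  -- basic facts about a
  have ha_add : ∀ i, a (i + m) = a i + n := by
    intro i
    show (n * (i + m) + r) / m = (n * i + r) / m + n
    have h : n * (i + m) + r = (n * i + r) + n * m := by ring
    rw [h, Nat.add_mul_div_right _ _ hm0]
  have hmono : ∀ i j, i ≤ j → a i ≤ a j := by
    intro i j hij
    exact Nat.div_le_div_right (by nlinarith)
  set D : ℕ → ℕ := fun i => a (i + k) - a i with hD
  have haD : ∀ i, a (i + k) = a i + D i := by
    intro i
    have := hmono i (i + k) (by omega)
    simp only [hD]
    omega
  -- bounds on D
  have hDub : ∀ i, D i ≤ (n * k + m - 1) / m := by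
    intro i
    have h1 : a (i + k) ≤ a i + (n * k + m - 1) / m := by
      show (n * (i + k) + r) / m ≤ (n * i + r) / m + (n * k + m - 1) / m
      have h : n * (i + k) + r = (n * i + r) + n * k := by ring
      rw [h]
      exact div_add_ub _ _ _ hm0
    have := haD i
    omega
  have hDlb : ∀ i, n * k / m ≤ D i := by
    intro i
    have h1 : a i + n * k / m ≤ a (i + k) := by
      show (n * i + r) / m + n * k / m ≤ (n * (i + k) + r) / m
      have h : n * (i + k) + r = (n * i + r) + n * k := by ring
      rw [h]
      exact Nat.add_div_le_add_div _ _ _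
    have := haD i
    omega
  -- cast lemma: reduce modular index
  have hcast : ∀ i, i < m → ((a ((i + k) % m) : ZMod n)) = ((a (i + k) : ℕ) : ZMod n) := by
    intro i hi
    by_cases h : i + k < m
    · rw [Nat.mod_eq_of_lt h]
    · have h1 : (i + k) % m = i + k - m := by
        rw [Nat.mod_eq_sub_mod (by omega), Nat.mod_eq_of_lt (by omega)]
      have h2 : a (i + k) = a (i + k - m) + n := by
        have := ha_add (i + k - m)
        have he : i + k - m + m = i + k := by omega
        rw [he] at this
        omega
      rw [h1, h2]
      push_cast
      simp [ZMod.natCast_self]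
  have hval : ∀ i, i < m → D i < n →
      (((a ((i + k) % m) : ZMod n)) - (a i : ZMod n)).val = D i := by
    intro i hi hlt
    rw [hcast i hi]
    have h1 : ((a (i + k) : ℕ) : ZMod n) - (a i : ZMod n) = ((D i : ℕ) : ZMod n) := by
      rw [haD i]
      push_cast
      ring
    rw [h1, ZMod.val_cast_of_lt hlt]
  -- telescoping sum
  have htel : ∑ i ∈ Finset.range m, D i = n * k := by
    have hz : (∑ i ∈ Finset.range m, D i : ℤ) = (n : ℤ) * k := by
      push_cast
      have h1 : ∀ i, (D i : ℤ) = (a (i + k) : ℤ) - (a i : ℤ) := by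
        intro i
        have := haD i
        push_cast [this]
        ring
      calc (∑ i ∈ Finset.range m, (D i : ℤ))
          = ∑ i ∈ Finset.range m, ((a (i + k) : ℤ) - (a i : ℤ)) := by
            exact Finset.sum_congr rfl fun i _ => h1 i
        _ = (∑ i ∈ Finset.range m, (a (i + k) : ℤ)) - ∑ i ∈ Finset.range m, (a i : ℤ) :=
            Finset.sum_sub_distrib _ _
        _ = (n : ℤ) * k := by
            have e1 : ∑ i ∈ Finset.range m, (a (i + k) : ℤ)
                = ∑ i ∈ Finset.Ico k (k + m), (a i : ℤ) := by
              rw [Finset.sum_Ico_eq_sum_range]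
              simp [add_comm k]
            have e2 : ∑ i ∈ Finset.Ico 0 k, (a i : ℤ) + ∑ i ∈ Finset.Ico k (k + m), (a i : ℤ)
                = ∑ i ∈ Finset.Ico 0 (k + m), (a i : ℤ) :=
              Finset.sum_Ico_consecutive _ (by omega) (by omega)
            have e3 : ∑ i ∈ Finset.Ico 0 m, (a i : ℤ) + ∑ i ∈ Finset.Ico m (k + m), (a i : ℤ)
                = ∑ i ∈ Finset.Ico 0 (k + m), (a i : ℤ) :=
              Finset.sum_Ico_consecutive _ (by omega) (by omega)
            have e4 : ∑ i ∈ Finset.Ico m (k + m), (a i : ℤ)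
                = ∑ i ∈ Finset.Ico 0 k, (a i : ℤ) + (n : ℤ) * k := by
              rw [Finset.sum_Ico_eq_sum_range]
              have : ∀ i, (a (m + i) : ℤ) = (a i : ℤ) + n := by
                intro i
                have := ha_add i
                rw [add_comm m i, this]
                push_cast; ring
              rw [Finset.sum_congr rfl fun i _ => this i, Finset.sum_add_distrib,
                Finset.sum_const, Finset.card_range, Finset.range_eq_Ico, nsmul_eq_mul]
              simp only [Nat.add_sub_cancel]
              push_cast
              ring
            rw [e1, Finset.range_eq_Ico]
            omega
    exact_mod_cast hz
  -- the summand is cycleDist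
  have hterm : ∀ i, i < m → D i < n →
      cycleDist n (((n * i + r) / m : ℕ) : ZMod n) (((n * ((i + k) % m) + r) / m : ℕ) : ZMod n)
        = min (D i) (n - D i) := by
    intro i hi hlt
    show min _ _ = _
    rw [hval i hi hlt]
  by_cases hA : 2 * k < m ∨ Even n
  · -- case A: each D i satisfies 2 * D i ≤ n
    rw [if_pos hA]
    have hub2 : 2 * ((n * k + m - 1) / m) ≤ n := by
      rcases Nat.lt_or_ge (2 * k) m with hlt | hge
      · -- 2k < m
        set q := (n * k + m - 1) / m with hq
        have h1 : q * m ≤ n * k + m - 1 := Nat.div_mul_le_self _ _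
        have h1' : q * m + 1 ≤ n * k + m := by
          have h0 : 1 ≤ n * k + m := by omega
          calc q * m + 1 ≤ (n * k + m - 1) + 1 := by exact Nat.add_le_add_right h1 1
            _ = n * k + m := Nat.sub_add_cancel h0
        have h2 : 2 * (n * k) + n ≤ n * m := by
          calc 2 * (n * k) + n = n * (2 * k + 1) := by ring
            _ ≤ n * m := Nat.mul_le_mul_left n (by omega)
        by_contra hcon
        push_neg at hcon
        have h3 : (n + 1) * m ≤ 2 * q * m := by
          have : n + 1 ≤ 2 * q := hcon
          exact Nat.mul_le_mul_right m this
        have hmn' : m ≤ n := hmn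
        linarith
      · -- 2k = m, n even
        have hmk : m = 2 * k := by omega
        have hev : Even n := by
          rcases hA with h' | h'
          · omega
          · exact h'
        obtain ⟨t, ht⟩ := hev
        have he : n * k + m - 1 = m * t + (m - 1) := by
          have : n * k = m * t := by rw [hmk, ht]; ring
          omega
        rw [he, Nat.mul_add_div hm0, Nat.div_eq_of_lt (by omega)]
        omega
    have hDn : ∀ i, 2 * D i ≤ n := fun i => le_trans (by have := hDub i; omega) hub2
    have hsum : ∀ i ∈ Finset.range m,
        cycleDist n (((n * i + r) / m : ℕ) : ZMod n)
          (((n * ((i + k) % m) + r) / m : ℕ) : ZMod n) = D i := by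
      intro i hi
      rw [Finset.mem_range] at hi
      have hlt : D i < n := by have := hDn i; omega
      rw [hterm i hi hlt]
      have := hDn i
      omega
    rw [Finset.sum_congr rfl hsum, htel]
  · -- case B: 2k = m, n odd
    rw [if_neg hA]
    push_neg at hA
    obtain ⟨hA1, hA2⟩ := hA
    have hmk : m = 2 * k := by omega
    rw [Nat.not_even_iff_odd] at hA2
    obtain ⟨t, ht⟩ := hA2
    have ht1 : 1 ≤ t := by omega
    have hlbv : n * k / m = t := by
      have he : n * k = m * t + k := by rw [hmk, ht]; ring
      rw [he, Nat.mul_add_div hm0, Nat.div_eq_of_lt (by omega)]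
      omega
    have hubv : (n * k + m - 1) / m = t + 1 := by
      have he : n * k + m - 1 = m * (t + 1) + (k - 1) := by
        have h5 : n * k = m * t + k := by rw [hmk, ht]; ring
        have h6 : m * (t + 1) = m * t + m := by ring
        omega
      rw [he, Nat.mul_add_div hm0, Nat.div_eq_of_lt (by omega)]
    have hsum : ∀ i ∈ Finset.range m,
        cycleDist n (((n * i + r) / m : ℕ) : ZMod n)
          (((n * ((i + k) % m) + r) / m : ℕ) : ZMod n) = t := by
      intro i hi
      rw [Finset.mem_range] at hi
      have hub := hDub i
      have hlb := hDlb i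
      rw [hubv] at hub
      rw [hlbv] at hlb
      have hlt : D i < n := by omega
      rw [hterm i hi hlt]
      omega
    rw [Finset.sum_congr rfl hsum, Finset.sum_const, Finset.card_range, smul_eq_mul]
    have : m * t = (n - 1) * k := by
      rw [hmk]
      have : n - 1 = 2 * t := by omega
      rw [this]
      ring
    exact this
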